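/- For any finite tree T (viewed as a reflexive graph) and any integer k ≥ 1, capt_k(T) = rad_k(T). -/

import Mathlib

open SimpleGraph Finset

/-- One step of a player in a reflexive graph: stay put (the loop) or move along an edge. -/
def stepRel {V : Type*} (G : SimpleGraph V) (u v : V) : Prop := u = v ∨ G.Adj u v

/-- `CatchIn G t c r`: with the cops currently at positions `c` and the robber at `r`
(cops to move next), the cops can guarantee to capture the robber within `t` further
rounds (a round consists of a cops' move followed by a robber's move; capture means
some cop occupies the robber's vertex). -/
def CatchIn {V : Type*} (G : SimpleGraph V) {k : ℕ} : ℕ → (Fin k → V) → V → Prop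
  | 0, c, r => ∃ i, c i = r
  | (t + 1), c, r => (∃ i, c i = r) ∨
      ∃ c' : Fin k → V, (∀ i, stepRel G (c i) (c' i)) ∧
        ((∃ i, c' i = r) ∨ ∀ r', stepRel G r r' → CatchIn G t c' r')

/-- `k` cops have a strategy capturing the robber within `t` rounds (not counting
round 0, in which the cops choose starting positions and then the robber, knowing
the cops' positions, chooses hers). -/
def CopsWinIn {V : Type*} (G : SimpleGraph V) (k t : ℕ) : Prop :=
  ∃ c₀ : Fin k → V, ∀ r₀ : V, CatchIn G t c₀ r₀

/-- The cop number: the least `k` such that `k` cops have a winning strategy. -/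
noncomputable def copNumber {V : Type*} (G : SimpleGraph V) : ℕ :=
  sInf {k | ∃ t, CopsWinIn G k t}

/-- The `k`-capture time: the least `t` such that `k` cops can guarantee capture
within `t` rounds. -/
noncomputable def captTime {V : Type*} (G : SimpleGraph V) (k : ℕ) : ℕ :=
  sInf {t | CopsWinIn G k t}

/-- The metric `k`-center radius: the least `r` such that some set of at most `k`
vertices is within distance `r` of every vertex. -/
noncomputable def radK {V : Type*} (G : SimpleGraph V) (k : ℕ) : ℕ :=
  sInf {r | ∃ S : Finset V, S.Nonempty ∧ S.card ≤ k ∧ ∀ v, ∃ s ∈ S, G.dist v s ≤ r}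

/-- `H ⊆ V(G)` induces a retract of the reflexive graph `G`: there is a map
`f : V(G) → H` fixing `H` pointwise such that every edge `uv` of `G` is sent to a
single vertex or to an edge. -/
def IsRetract {V : Type*} (G : SimpleGraph V) (H : Set V) : Prop :=
  ∃ f : V → V, (∀ v, f v ∈ H) ∧ (∀ v ∈ H, f v = v) ∧
    ∀ u v, G.Adj u v → f u = f v ∨ G.Adj (f u) (f v)

section TreeAux
variable {V : Type*} [DecidableEq V] {T : SimpleGraph V}

lemma tpath_length_eq (hT : T.IsTree) {u v : V} {p : T.Walk u v} (hp : p.IsPath) :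
    p.length = T.dist u v := by
  obtain ⟨q, hq, hql⟩ := hT.isConnected.exists_path_of_dist u v
  have hpq : (⟨p, hp⟩ : T.Path u v) = ⟨q, hq⟩ := hT.IsAcyclic.path_unique _ _
  rw [show p = q from congrArg Subtype.val hpq, hql]

lemma tbtw_of_mem (hT : T.IsTree) {u v x : V} {p : T.Walk u v} (hp : p.IsPath)
    (hx : x ∈ p.support) : T.dist u x + T.dist x v = T.dist u v := by
  have hs := p.take_spec hx
  have h1 : (p.takeUntil x hx).length = T.dist u x := tpath_length_eq hT (hp.takeUntil hx)
  have h2 : (p.dropUntil x hx).length = T.dist x v := tpath_length_eq hT (hp.dropUntil hx)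
  have h3 : p.length = T.dist u v := tpath_length_eq hT hp
  rw [← hs, SimpleGraph.Walk.length_append] at h3
  omega

lemma tisPath_append (hT : T.IsTree) {u v w : V} {p : T.Walk u v} {q : T.Walk v w}
    (hp : p.IsPath) (hq : q.IsPath)
    (hdisj : ∀ x, x ∈ p.support → x ∈ q.support → x = v) :
    (p.append q).IsPath := by
  apply SimpleGraph.Walk.IsPath.mk'
  rw [SimpleGraph.Walk.support_append]
  have hqn := hq.support_nodup
  rw [q.support_eq_cons] at hqn
  refine List.Nodup.append hp.support_nodup (List.nodup_cons.1 hqn).2 ?_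
  intro x hxp hxq
  have hxq' : x ∈ q.support := by
    rw [q.support_eq_cons]; exact List.mem_cons_of_mem _ hxq
  have hxv := hdisj x hxp hxq'
  subst hxv
  exact (List.nodup_cons.1 hqn).1 hxq

lemma tmem_of_btw (hT : T.IsTree) {u v x : V} {p : T.Walk u v} (hp : p.IsPath)
    (h : T.dist u x + T.dist x v = T.dist u v) : x ∈ p.support := by
  obtain ⟨p1, hp1, hl1⟩ := hT.isConnected.exists_path_of_dist u x
  obtain ⟨p2, hp2, hl2⟩ := hT.isConnected.exists_path_of_dist x v
  have hdisj : ∀ z, z ∈ p1.support → z ∈ p2.support → z = x := by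
    intro z hz1 hz2
    have b1 := tbtw_of_mem hT hp1 hz1
    have b2 := tbtw_of_mem hT hp2 hz2
    have tri : T.dist u v ≤ T.dist u z + T.dist z v := hT.isConnected.dist_triangle
    have hc : T.dist z x = T.dist x z := SimpleGraph.dist_comm ..
    have hzx : T.dist z x = 0 := by omega
    exact (hT.isConnected.dist_eq_zero_iff).1 hzx
  have hW : (p1.append p2).IsPath := tisPath_append hT hp1 hp2 hdisj
  have heq : (⟨p1.append p2, hW⟩ : T.Path u v) = ⟨p, hp⟩ := hT.IsAcyclic.path_unique _ _
  have hxW : x ∈ (p1.append p2).support :=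
    SimpleGraph.Walk.subset_support_append_left _ _ p1.end_mem_support
  rw [← show p1.append p2 = p from congrArg Subtype.val heq]
  exact hxW

lemma tadj_dist (hT : T.IsTree) {a b : V} (hab : T.Adj a b) (w : V) :
    T.dist a w = T.dist b w + 1 ∨ T.dist b w = T.dist a w + 1 := by
  have hd1 : T.dist a b = 1 := (SimpleGraph.dist_eq_one_iff_adj).2 hab
  have h1 : T.dist a w ≤ T.dist a b + T.dist b w := hT.isConnected.dist_triangle
  have h2 : T.dist b w ≤ T.dist b a + T.dist a w := hT.isConnected.dist_triangle
  have hba : T.dist b a = 1 := (SimpleGraph.dist_eq_one_iff_adj).2 hab.symm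
  have hne : T.dist a w ≠ T.dist b w := by
    intro he
    obtain ⟨p, hp, hl⟩ := hT.isConnected.exists_path_of_dist w a
    by_cases hb : b ∈ p.support
    · have hbt := tbtw_of_mem hT hp hb
      have hc1 : T.dist w a = T.dist a w := SimpleGraph.dist_comm ..
      have hc2 : T.dist w b = T.dist b w := SimpleGraph.dist_comm ..
      omega
    · have hq : (p.append (SimpleGraph.Walk.cons hab SimpleGraph.Walk.nil)).IsPath := by
        apply tisPath_append hT hp
        · rw [SimpleGraph.Walk.cons_isPath_iff]
          constructor
          · exact SimpleGraph.Walk.IsPath.nil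
          · simp [hab.ne]
        · intro z hz1 hz2
          rw [SimpleGraph.Walk.support_cons, SimpleGraph.Walk.support_nil] at hz2
          rcases List.mem_cons.1 hz2 with rfl | hz2
          · rfl
          · simp at hz2; subst hz2; exact absurd hz1 hb
      have hlen := tpath_length_eq hT hq
      rw [SimpleGraph.Walk.length_append] at hlen
      simp at hlen
      have hc1 : T.dist w a = T.dist a w := SimpleGraph.dist_comm ..
      have hc2 : T.dist w b = T.dist b w := SimpleGraph.dist_comm ..
      omega
  omega

lemma texists_toward (hT : T.IsTree) {u v : V} (h : T.dist u v ≠ 0) :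
    ∃ u', T.Adj u u' ∧ T.dist u' v + 1 = T.dist u v := by
  obtain ⟨p, hp, hl⟩ := hT.isConnected.exists_path_of_dist u v
  cases p with
  | nil => exact absurd SimpleGraph.dist_self h
  | cons h' q =>
    refine ⟨_, h', ?_⟩
    have hq := tpath_length_eq hT hp.of_cons
    rw [SimpleGraph.Walk.length_cons] at hl
    omega

lemma tcut (hT : T.IsTree) {c c' z z' : V} (hcc' : T.Adj c c')
    (hz : T.dist z c' = T.dist z c + 1) (hz' : T.dist z' c = T.dist z' c' + 1) :
    T.dist z z' = T.dist z c + 1 + T.dist c' z' := by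
  obtain ⟨p, hp, hlp⟩ := hT.isConnected.exists_path_of_dist z c
  obtain ⟨q, hq, hlq⟩ := hT.isConnected.exists_path_of_dist c' z'
  have hd1 : T.dist c c' = 1 := (SimpleGraph.dist_eq_one_iff_adj).2 hcc'
  have hd1' : T.dist c' c = 1 := (SimpleGraph.dist_eq_one_iff_adj).2 hcc'.symm
  have key : ∀ x, x ∈ p.support → x ∈ q.support → False := by
    intro x hxp hxq
    have b1 := tbtw_of_mem hT hp hxp
    have b2 := tbtw_of_mem hT hq hxq
    have t1 : T.dist z c' ≤ T.dist z x + T.dist x c' := hT.isConnected.dist_triangle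
    have t2 : T.dist z' c ≤ T.dist z' x + T.dist x c := hT.isConnected.dist_triangle
    have e1 : T.dist x c' ≤ T.dist x c + T.dist c c' := hT.isConnected.dist_triangle
    have hc1 : T.dist x z' = T.dist z' x := SimpleGraph.dist_comm ..
    have hc2 : T.dist c' x = T.dist x c' := SimpleGraph.dist_comm ..
    have hc3 : T.dist c' z' = T.dist z' c' := SimpleGraph.dist_comm ..
    omega
  have hcq : c ∉ q.support := fun hx => key c p.end_mem_support hx
  have hq' : (SimpleGraph.Walk.cons hcc' q).IsPath := by
    rw [SimpleGraph.Walk.cons_isPath_iff]; exact ⟨hq, hcq⟩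
  have hdisj : ∀ x, x ∈ p.support → x ∈ (SimpleGraph.Walk.cons hcc' q).support → x = c := by
    intro x hxp hxq
    rw [SimpleGraph.Walk.support_cons] at hxq
    rcases List.mem_cons.1 hxq with rfl | hxq
    · rfl
    · exact absurd hxq (fun hh => key x hxp hh)
  have hW := tisPath_append hT hp hq' hdisj
  have hlen := tpath_length_eq hT hW
  rw [SimpleGraph.Walk.length_append, SimpleGraph.Walk.length_cons] at hlen
  omega

lemma tbtw_unique (hT : T.IsTree) {s u a b : V}
    (h1 : T.dist s a + T.dist a u = T.dist s u)
    (h2 : T.dist s b + T.dist b u = T.dist s u)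
    (h3 : T.dist s a = T.dist s b) : a = b := by
  obtain ⟨p, hp, _⟩ := hT.isConnected.exists_path_of_dist s u
  have ha := tmem_of_btw hT hp h1
  have hb := tmem_of_btw hT hp h2
  have hsplit := p.take_spec ha
  have hmem : b ∈ (p.takeUntil a ha).support ∨ b ∈ (p.dropUntil a ha).support := by
    rw [← SimpleGraph.Walk.mem_support_append_iff, hsplit]; exact hb
  rcases hmem with hmem | hmem
  · have hbt := tbtw_of_mem hT (hp.takeUntil ha) hmem
    have hc : T.dist b a = T.dist a b := SimpleGraph.dist_comm ..
    have : T.dist a b = 0 := by omega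
    exact (hT.isConnected.dist_eq_zero_iff).1 this
  · have hbt := tbtw_of_mem hT (hp.dropUntil ha) hmem
    have : T.dist a b = 0 := by omega
    exact (hT.isConnected.dist_eq_zero_iff).1 this

end TreeAux

section ProjAux
variable {V : Type*} [DecidableEq V] {T : SimpleGraph V}


noncomputable def descend (hT : T.IsTree) (s : V) (v : V) : V :=
  if h : T.dist v s = 0 then v else Classical.choose (texists_toward hT h)

lemma descend_spec (hT : T.IsTree) (s v : V) (h : T.dist v s ≠ 0) :
    T.Adj v (descend hT s v) ∧ T.dist (descend hT s v) s + 1 = T.dist v s := by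
  rw [descend, dif_neg h]; exact Classical.choose_spec (texists_toward hT h)

lemma iterate_descend (hT : T.IsTree) (s : V) : ∀ (n : ℕ) (v : V), n ≤ T.dist v s →
    T.dist ((descend hT s)^[n] v) s = T.dist v s - n ∧ T.dist v ((descend hT s)^[n] v) = n := by
  intro n
  induction n with
  | zero => intro v _; simp
  | succ n IH =>
    intro v hn
    rw [Function.iterate_succ_apply]
    have h0 : T.dist v s ≠ 0 := by omega
    obtain ⟨hadj, hd⟩ := descend_spec hT s v h0
    set v1 := descend hT s v with hv1def
    have h1 : n ≤ T.dist v1 s := by omega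
    obtain ⟨e1, e2⟩ := IH v1 h1
    set X := (descend hT s)^[n] v1 with hXdef
    have hv1 : T.dist v v1 = 1 := (SimpleGraph.dist_eq_one_iff_adj).2 hadj
    have up : T.dist v X ≤ T.dist v v1 + T.dist v1 X := hT.isConnected.dist_triangle
    have low : T.dist v s ≤ T.dist v X + T.dist X s := hT.isConnected.dist_triangle
    omega

noncomputable def proj (hT : T.IsTree) (s : V) (r : ℕ) (v : V) : V :=
  (descend hT s)^[T.dist v s - r] v

lemma proj_spec (hT : T.IsTree) (s : V) (r : ℕ) (v : V) :
    T.dist (proj hT s r v) s = min r (T.dist v s) ∧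
    T.dist v (proj hT s r v) = T.dist v s - r := by
  have h := iterate_descend hT s (T.dist v s - r) v (by omega)
  unfold proj
  omega

lemma proj_ball (hT : T.IsTree) (s : V) (r : ℕ) (v : V) :
    T.dist (proj hT s r v) s ≤ r := by
  have := (proj_spec hT s r v).1; omega

lemma proj_fix (hT : T.IsTree) {s : V} {r : ℕ} {v : V} (h : T.dist v s ≤ r) :
    proj hT s r v = v := by
  unfold proj
  rw [Nat.sub_eq_zero_of_le h]
  rfl

lemma stepRel_symm' {u v : V} (h : stepRel T u v) : stepRel T v u :=
  h.elim (fun e => Or.inl e.symm) (fun a => Or.inr a.symm)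

lemma proj_step_aux (hT : T.IsTree) (s : V) (r : ℕ) {u v : V} (hadj : T.Adj u v)
    (h : T.dist u s = T.dist v s + 1) :
    stepRel T (proj hT s r u) (proj hT s r v) := by
  by_cases hr : T.dist u s ≤ r
  · rw [proj_fix hT hr, proj_fix hT (by omega)]
    exact Or.inr hadj
  · have hvr : r ≤ T.dist v s := by omega
    left
    have pu := proj_spec hT s r u
    have pv := proj_spec hT s r v
    have hvu : T.dist v u = 1 := (SimpleGraph.dist_eq_one_iff_adj).2 hadj.symm
    -- distances from s
    have hsu : T.dist s (proj hT s r u) = r := by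
      have hc : T.dist s (proj hT s r u) = T.dist (proj hT s r u) s := SimpleGraph.dist_comm ..
      omega
    have hsv : T.dist s (proj hT s r v) = r := by
      have hc : T.dist s (proj hT s r v) = T.dist (proj hT s r v) s := SimpleGraph.dist_comm ..
      omega
    -- betweenness of proj u on s--u
    have b1 : T.dist s (proj hT s r u) + T.dist (proj hT s r u) u = T.dist s u := by
      have hc1 : T.dist s u = T.dist u s := SimpleGraph.dist_comm ..
      have hc2 : T.dist (proj hT s r u) u = T.dist u (proj hT s r u) := SimpleGraph.dist_comm ..
      omega
    -- betweenness of proj v on s--u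
    have b2 : T.dist s (proj hT s r v) + T.dist (proj hT s r v) u = T.dist s u := by
      have t1 : T.dist (proj hT s r v) u ≤ T.dist (proj hT s r v) v + T.dist v u :=
        hT.isConnected.dist_triangle
      have t2 : T.dist u s ≤ T.dist u (proj hT s r v) + T.dist (proj hT s r v) s :=
        hT.isConnected.dist_triangle
      have hc1 : T.dist s u = T.dist u s := SimpleGraph.dist_comm ..
      have hc2 : T.dist (proj hT s r v) v = T.dist v (proj hT s r v) := SimpleGraph.dist_comm ..
      have hc3 : T.dist u (proj hT s r v) = T.dist (proj hT s r v) u := SimpleGraph.dist_comm ..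
      omega
    exact tbtw_unique hT b1 b2 (by omega)

lemma proj_step (hT : T.IsTree) (s : V) (r : ℕ) {u v : V} (h : stepRel T u v) :
    stepRel T (proj hT s r u) (proj hT s r v) := by
  rcases h with rfl | hadj
  · exact Or.inl rfl
  · rcases tadj_dist hT hadj s with h | h
    · exact proj_step_aux hT s r hadj h
    · exact stepRel_symm' (proj_step_aux hT s r hadj.symm h)

end ProjAux

section PotAux
variable {V : Type*} [DecidableEq V] [Fintype V] {T : SimpleGraph V}

lemma stepRel_dist_le (hT : T.IsTree) {u v : V} (h : stepRel T u v) : T.dist u v ≤ 1 := by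
  rcases h with rfl | h
  · have := SimpleGraph.dist_self (G := T) (v := u); omega
  · exact le_of_eq ((SimpleGraph.dist_eq_one_iff_adj).2 h)

noncomputable def pot (T : SimpleGraph V) (s : V) (r : ℕ) (c y : V) : ℕ :=
  max (T.dist c y)
    ((Finset.univ.filter fun w => T.dist w s ≤ r ∧ T.dist y w + 2 ≤ T.dist c w).sup
      fun w => T.dist c w)

lemma dist_le_pot {s c y : V} {r : ℕ} : T.dist c y ≤ pot T s r c y := le_max_left _ _

lemma le_pot_of {s c y w : V} {r : ℕ} (hw : T.dist w s ≤ r)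
    (he : T.dist y w + 2 ≤ T.dist c w) : T.dist c w ≤ pot T s r c y :=
  le_trans (Finset.le_sup (by simp [Finset.mem_filter, hw, he])) (le_max_right _ _)

lemma pot_decrease (hT : T.IsTree) {s : V} {r : ℕ} {c c' y y' : V}
    (hd : 2 ≤ T.dist c y) (hadj : T.Adj c c') (hc' : T.dist c' y + 1 = T.dist c y)
    (hyy' : stepRel T y y') (hne : y' ≠ c') (hball : T.dist y' s ≤ r) :
    pot T s r c' y' + 1 ≤ pot T s r c y := by
  have hyside : T.dist y c = T.dist y c' + 1 := by
    have hc1 : T.dist y c = T.dist c y := SimpleGraph.dist_comm ..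
    have hc2 : T.dist y c' = T.dist c' y := SimpleGraph.dist_comm ..
    omega
  have hy'side : T.dist y' c = T.dist y' c' + 1 := by
    rcases hyy' with rfl | hadjy
    · exact hyside
    · rcases tadj_dist hT hadj y' with h | h
      · have hc1 : T.dist y' c = T.dist c y' := SimpleGraph.dist_comm ..
        have hc2 : T.dist y' c' = T.dist c' y' := SimpleGraph.dist_comm ..
        omega
      · exfalso
        have hcut := tcut hT hadj (z := y') (z' := y)
          (by have hc1 : T.dist y' c = T.dist c y' := SimpleGraph.dist_comm ..
              have hc2 : T.dist y' c' = T.dist c' y' := SimpleGraph.dist_comm ..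
              omega)
          hyside
        have h1 : T.dist y y' = 1 := (SimpleGraph.dist_eq_one_iff_adj).2 hadjy
        have hc3 : T.dist y' y = T.dist y y' := SimpleGraph.dist_comm ..
        have hc4 : T.dist c' y = T.dist y c' := SimpleGraph.dist_comm ..
        omega
  have hstep1 : T.dist c' y' + 1 ≤ pot T s r c y := by
    rcases hyy' with rfl | hadjy
    · exact le_trans (le_of_eq hc') dist_le_pot
    · by_cases hle : T.dist c' y' + 1 ≤ T.dist c y
      · exact le_trans hle dist_le_pot
      · have h1 := tadj_dist hT hadjy c'
        have hc1 : T.dist y c' = T.dist c' y := SimpleGraph.dist_comm ..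
        have hc2 : T.dist y' c' = T.dist c' y' := SimpleGraph.dist_comm ..
        have hcy' : T.dist c' y' = T.dist c y := by omega
        have hcy'2 : T.dist c y' = T.dist c y + 1 := by
          have hc3 : T.dist y' c = T.dist c y' := SimpleGraph.dist_comm ..
          omega
        have hyy'1 : T.dist y y' = 1 := (SimpleGraph.dist_eq_one_iff_adj).2 hadjy
        have := le_pot_of (T := T) (c := c) (y := y) hball (by omega)
        omega
  have hstep2 : ∀ w, T.dist w s ≤ r → T.dist y' w + 2 ≤ T.dist c' w →
      T.dist c' w + 1 ≤ pot T s r c y := by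
    intro w hws helig
    rcases tadj_dist hT hadj w with h | h
    · have hdyy' : T.dist y y' ≤ 1 := stepRel_dist_le hT hyy'
      have tri : T.dist y w ≤ T.dist y y' + T.dist y' w := hT.isConnected.dist_triangle
      have := le_pot_of (T := T) (c := c) (y := y) hws (by omega)
      omega
    · exfalso
      have hcut := tcut hT hadj (z := w) (z' := y')
        (by have hc1 : T.dist w c = T.dist c w := SimpleGraph.dist_comm ..
            have hc2 : T.dist w c' = T.dist c' w := SimpleGraph.dist_comm ..
            omega)
        hy'side
      have hc1 : T.dist w y' = T.dist y' w := SimpleGraph.dist_comm ..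
      have hc2 : T.dist w c = T.dist c w := SimpleGraph.dist_comm ..
      have hc3 : T.dist c' y' = T.dist y' c' := SimpleGraph.dist_comm ..
      omega
  have hP : 2 ≤ pot T s r c y := le_trans hd dist_le_pot
  have hlt : pot T s r c' y' < pot T s r c y := by
    apply max_lt
    · omega
    · rw [Finset.sup_lt_iff (show (⊥ : ℕ) < pot T s r c y by rw [Nat.bot_eq_zero]; omega)]
      intro w hw
      rw [Finset.mem_filter] at hw
      have := hstep2 w hw.2.1 hw.2.2
      omega
  omega


lemma pot_init (hT : T.IsTree) {s : V} {r : ℕ} {y : V} (hy : T.dist s y ≤ r) :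
    pot T s r s y ≤ r := by
  apply max_le hy
  apply Finset.sup_le
  intro w hw
  rw [Finset.mem_filter] at hw
  have hc : T.dist s w = T.dist w s := SimpleGraph.dist_comm ..
  omega

end PotAux

section GameAux
variable {V : Type*} [DecidableEq V] [Fintype V] {T : SimpleGraph V}

lemma stepRel_of_dist_le_one (hT : T.IsTree) {u v : V} (h : T.dist u v ≤ 1) :
    stepRel T u v := by
  rcases Nat.le_one_iff_eq_zero_or_eq_one.1 h with h | h
  · exact Or.inl ((hT.isConnected.dist_eq_zero_iff).1 h)
  · exact Or.inr ((SimpleGraph.dist_eq_one_iff_adj).1 h)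

lemma game (hT : T.IsTree) {k : ℕ} (s : Fin k → V) (r : ℕ)
    (hcov : ∀ v, ∃ i, T.dist v (s i) ≤ r) :
    ∀ (t : ℕ) (c : Fin k → V) (x : V),
      (∀ i, stepRel T (c i) (proj hT (s i) r x) ∨
        pot T (s i) r (c i) (proj hT (s i) r x) ≤ t + 1) →
      CatchIn T (t + 1) c x := by
  classical
  intro t
  induction t with
  | zero =>
    intro c x h
    have hall : ∀ i, stepRel T (c i) (proj hT (s i) r x) := by
      intro i
      rcases h i with h1 | h1
      · exact h1
      · exact stepRel_of_dist_le_one hT (le_trans dist_le_pot h1)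
    obtain ⟨j, hj⟩ := hcov x
    exact Or.inr ⟨fun i => proj hT (s i) r x, hall, Or.inl ⟨j, proj_fix hT hj⟩⟩
  | succ t IH =>
    intro c x h
    set y : Fin k → V := fun i => proj hT (s i) r x with hy
    have hne0 : ∀ i, ¬ stepRel T (c i) (y i) → T.dist (c i) (y i) ≠ 0 := by
      intro i hst h0
      exact hst (Or.inl ((hT.isConnected.dist_eq_zero_iff).1 h0))
    let c' : Fin k → V := fun i =>
      if hst : stepRel T (c i) (y i) then y i
      else Classical.choose (texists_toward hT (hne0 i hst))
    have hstep : ∀ i, stepRel T (c i) (c' i) := by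
      intro i
      by_cases hst : stepRel T (c i) (y i)
      · simp only [c', dif_pos hst]; exact hst
      · simp only [c', dif_neg hst]
        exact Or.inr (Classical.choose_spec (texists_toward hT (hne0 i hst))).1
    obtain ⟨j, hj⟩ := hcov x
    by_cases hAj : stepRel T (c j) (y j)
    · refine Or.inr ⟨c', hstep, Or.inl ⟨j, ?_⟩⟩
      have hcj : c' j = y j := by simp only [c']; rw [dif_pos hAj]
      rw [hcj]
      exact proj_fix hT hj
    · refine Or.inr ⟨c', hstep, Or.inr ?_⟩
      intro x' hx'
      apply IH
      intro i
      by_cases hst : stepRel T (c i) (y i)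
      · left
        have hci : c' i = y i := by simp only [c']; rw [dif_pos hst]
        rw [hci]
        exact proj_step hT (s i) r hx'
      · have hpot : pot T (s i) r (c i) (y i) ≤ t + 2 := (h i).resolve_left hst
        have hspec := Classical.choose_spec (texists_toward hT (hne0 i hst))
        have hci : c' i = Classical.choose (texists_toward hT (hne0 i hst)) := by
          simp only [c']; rw [dif_neg hst]
        by_cases hst' : stepRel T (c' i) (proj hT (s i) r x')
        · exact Or.inl hst'
        · right
          have hd2 : 2 ≤ T.dist (c i) (y i) := by
            have h0 := hne0 i hst
            have h1 : T.dist (c i) (y i) ≠ 1 :=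
              fun h1 => hst (Or.inr ((SimpleGraph.dist_eq_one_iff_adj).1 h1))
            omega
          have hdl := pot_decrease hT hd2 (hci ▸ hspec.1) (hci ▸ hspec.2)
            (proj_step hT (s i) r hx')
            (fun he => hst' (he ▸ Or.inl rfl))
            (proj_ball hT (s i) r x')
          omega

lemma stationary (hT : T.IsTree) {k : ℕ} :
    ∀ (t : ℕ) (c : Fin k → V) (x : V), CatchIn T t c x → ∃ i, T.dist (c i) x ≤ t := by
  intro t
  induction t with
  | zero =>
    rintro c x ⟨i, hi⟩
    exact ⟨i, by rw [hi, SimpleGraph.dist_self]⟩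
  | succ t IH =>
    rintro c x (⟨i, hi⟩ | ⟨c', hstep, (⟨i, hi⟩ | hrec)⟩)
    · exact ⟨i, by rw [hi, SimpleGraph.dist_self]; omega⟩
    · refine ⟨i, ?_⟩
      have tri : T.dist (c i) x ≤ T.dist (c i) (c' i) + T.dist (c' i) x :=
        hT.isConnected.dist_triangle
      have h1 : T.dist (c i) (c' i) ≤ 1 := by
        rcases hstep i with he | he
        · rw [he, SimpleGraph.dist_self]; omega
        · exact le_of_eq ((SimpleGraph.dist_eq_one_iff_adj).2 he)
      have h2 : T.dist (c' i) x = 0 := by rw [hi, SimpleGraph.dist_self]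
      omega
    · obtain ⟨i, hi⟩ := IH c' x (hrec x (Or.inl rfl))
      refine ⟨i, ?_⟩
      have tri : T.dist (c i) x ≤ T.dist (c i) (c' i) + T.dist (c' i) x :=
        hT.isConnected.dist_triangle
      have h1 : T.dist (c i) (c' i) ≤ 1 := by
        rcases hstep i with he | he
        · rw [he, SimpleGraph.dist_self]; omega
        · exact le_of_eq ((SimpleGraph.dist_eq_one_iff_adj).2 he)
      omega

end GameAux

/-- For any finite tree `T` and any `k ≥ 1`, the `k`-capture time equals the
metric `k`-center radius. -/
theorem captTime_tree_eq_radK {V : Type*} [Fintype V] (T : SimpleGraph V)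
    (hT : T.IsTree) (k : ℕ) (hk : 1 ≤ k) :
    captTime T k = radK T k := by
  classical
  have hconn := hT.isConnected
  have hne : Nonempty V := hconn.nonempty
  obtain ⟨v₀⟩ := hne
  set R := {r | ∃ S : Finset V, S.Nonempty ∧ S.card ≤ k ∧ ∀ v, ∃ s ∈ S, T.dist v s ≤ r} with hR
  set W := {t | CopsWinIn T k t} with hW
  -- any element of R gives a cop win
  have key : ∀ ρ ∈ R, CopsWinIn T k ρ := by
    rintro ρ ⟨S, hSne, hScard, hScov⟩
    obtain ⟨s₀, hs₀⟩ := hSne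
    set s : Fin k → V := fun i =>
      if h : (i : ℕ) < S.toList.length then S.toList.get ⟨i, h⟩ else s₀ with hs
    have hcov : ∀ v, ∃ i, T.dist v (s i) ≤ ρ := by
      intro v
      obtain ⟨x, hxS, hxd⟩ := hScov v
      have hxl : x ∈ S.toList := Finset.mem_toList.2 hxS
      obtain ⟨j, hj, hjx⟩ := List.mem_iff_getElem.1 hxl
      have hjk : j < k := lt_of_lt_of_le (by rwa [Finset.length_toList] at hj) hScard
      refine ⟨⟨j, hjk⟩, ?_⟩
      have : s ⟨j, hjk⟩ = x := by
        rw [hs]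
        simp only
        rw [dif_pos (by simpa using hj)]
        simpa using hjx
      rw [this]
      exact hxd
    cases ρ with
    | zero =>
      refine ⟨s, fun x => ?_⟩
      obtain ⟨i, hi⟩ := hcov x
      exact ⟨i, ((hconn.dist_eq_zero_iff).1 (Nat.le_zero.1 hi)).symm⟩
    | succ t =>
      refine ⟨s, fun x => ?_⟩
      apply game hT s (t + 1) hcov t
      intro i
      right
      have hb : T.dist (s i) (proj hT (s i) (t+1) x) ≤ t + 1 := by
        have := proj_ball hT (s i) (t+1) x
        have hc : T.dist (s i) (proj hT (s i) (t+1) x)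
            = T.dist (proj hT (s i) (t+1) x) (s i) := SimpleGraph.dist_comm ..
        omega
      exact pot_init hT hb
  -- R is nonempty
  have hRne : R.Nonempty := by
    refine ⟨Finset.univ.sup (fun v => T.dist v v₀), {v₀}, ⟨v₀, Finset.mem_singleton_self v₀⟩,
      by simpa using hk, fun v => ⟨v₀, Finset.mem_singleton_self v₀, ?_⟩⟩
    exact Finset.le_sup (f := fun v => T.dist v v₀) (Finset.mem_univ v)
  have hradR : radK T k ∈ R := Nat.sInf_mem hRne
  have hWne : W.Nonempty := ⟨radK T k, key _ hradR⟩
  have h1 : captTime T k ≤ radK T k := Nat.sInf_le (key _ hradR)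
  have hcapt : CopsWinIn T k (captTime T k) := Nat.sInf_mem hWne
  have h2 : radK T k ≤ captTime T k := by
    apply Nat.sInf_le
    obtain ⟨c₀, hc₀⟩ := hcapt
    refine ⟨Finset.univ.image c₀, ?_, ?_, ?_⟩
    · exact ⟨c₀ ⟨0, hk⟩, Finset.mem_image_of_mem _ (Finset.mem_univ _)⟩
    · exact le_trans (Finset.card_image_le) (by simp)
    · intro v
      obtain ⟨i, hi⟩ := stationary hT (captTime T k) c₀ v (hc₀ v)
      refine ⟨c₀ i, Finset.mem_image_of_mem _ (Finset.mem_univ _), ?_⟩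
      have hc : T.dist v (c₀ i) = T.dist (c₀ i) v := SimpleGraph.dist_comm ..
      omega
  omega
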